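/- Define the weight of (a,b,c,d) ∈ ℤ₄⁴ in D(1,2) as in the previous context. Then every nonzero element of the subgroup C' of ℤ₄⁴ generated by (0,1,2,3), (1,0,1,2), and (0,0,1,1) has D(1,2)-weight at least 2. -/
import Mathlib

/-- The Shrikhande weight on `ZMod 4 × ZMod 4`. -/
def shW (p : ZMod 4 × ZMod 4) : ℕ :=
  if p = 0 then 0
  else if p ∈ ({(0,1),(0,3),(1,0),(3,0),(1,1),(3,3)} : Finset (ZMod 4 × ZMod 4)) then 1
  else 2

/-- The weight of a vector of `ℤ₄⁴` viewed as a vertex of the Doob graph `D(1,2)`. -/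
def doobW12 (v : Fin 4 → ZMod 4) : ℕ :=
  shW (v 0, v 1) + (if v 2 ≠ 0 then 1 else 0) + (if v 3 ≠ 0 then 1 else 0)

lemma key : ∀ a b c : ZMod 4,
    a • ![0,1,2,3] + b • ![1,0,1,2] + c • ![(0:ZMod 4),0,1,1] ≠ 0 →
    2 ≤ doobW12 (a • ![0,1,2,3] + b • ![1,0,1,2] + c • ![0,0,1,1]) := by
  decide

theorem stmt_10 :
    ∀ v ∈ AddSubgroup.closure
      ({![0,1,2,3], ![1,0,1,2], ![0,0,1,1]} : Set (Fin 4 → ZMod 4)),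
      v ≠ 0 → 2 ≤ doobW12 v := by
  intro v hv hne
  have hsub : AddSubgroup.closure
      ({![0,1,2,3], ![1,0,1,2], ![0,0,1,1]} : Set (Fin 4 → ZMod 4)) ≤
      (Submodule.span (ZMod 4) ({![0,1,2,3], ![1,0,1,2], ![0,0,1,1]} :
        Set (Fin 4 → ZMod 4))).toAddSubgroup := by
    rw [AddSubgroup.closure_le]
    exact Submodule.subset_span
  have hv' := hsub hv
  rw [Submodule.mem_toAddSubgroup, Submodule.mem_span_insert] at hv'
  obtain ⟨a, z, hz, rfl⟩ := hv'
  rw [Submodule.mem_span_insert] at hz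
  obtain ⟨b, w, hw, rfl⟩ := hz
  rw [Submodule.mem_span_singleton] at hw
  obtain ⟨c, rfl⟩ := hw
  rw [← add_assoc] at hne ⊢
  exact key a b c hne
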